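/- Let i be an integer with p² ∤ i and let u ≥ 0 be an integer. Then for every integer n ≥ u and every integer D, A_n(D, p^{2u}·i) = Σ_{t=0}^{n−u} (12/p)^{n−u−t}·(−i/p)^{n−u−t}·p^u·A(D, p^{2t}·i) + Σ_{t=1}^{u} p^{u−t}·A(D, p^{2n−2u+4t}·i). -/

import Mathlib

def Wop (pz ε : ℤ) (c : ℕ → ℤ) : ℕ → ℤ :=
  fun t => pz * c (t+1) + (if t = 0 then ε * c 0 else c (t-1))

def cc (pz ε : ℤ) (u : ℕ) : ℕ → ℕ → ℤ
  | 0 => fun t => if t = u then 1 else 0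
  | 1 => Wop pz ε (cc pz ε u 0)
  | (n+2) => fun t => Wop pz ε (cc pz ε u (n+1)) t - pz * cc pz ε u n t

def ccf (pz ε : ℤ) (u n t : ℕ) : ℤ :=
  if t + u ≤ n then ε ^ (n - u - t) * pz ^ u
  else if u ≤ n + t ∧ t ≤ n + u ∧ (n + u - t) % 2 = 0 then pz ^ ((n + u - t) / 2)
  else 0

lemma ccf_1 (pz ε : ℤ) (u n t : ℕ) (h : t + u ≤ n) :
    ccf pz ε u n t = ε ^ (n - u - t) * pz ^ u := by rw [ccf, if_pos h]

lemma ccf_2 (pz ε : ℤ) (u n t : ℕ) (h : ¬ (t + u ≤ n)) (h2 : u ≤ n + t) (h3 : t ≤ n + u)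
    (h4 : (n + u - t) % 2 = 0) :
    ccf pz ε u n t = pz ^ ((n + u - t) / 2) := by
  rw [ccf, if_neg h, if_pos ⟨h2, h3, h4⟩]

lemma ccf_0 (pz ε : ℤ) (u n t : ℕ) (h : ¬ (t + u ≤ n))
    (h2 : ¬ (u ≤ n + t) ∨ ¬ (t ≤ n + u) ∨ (n + u - t) % 2 = 1) :
    ccf pz ε u n t = 0 := by
  rw [ccf, if_neg h, if_neg]
  rintro ⟨a, b, c⟩
  rcases h2 with h2 | h2 | h2 <;> omega

lemma cc_supp (pz ε : ℤ) (u : ℕ) : ∀ n t, n + u < t → cc pz ε u n t = 0 := by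
  intro n
  induction n using Nat.twoStepInduction with
  | zero => intro t ht; simp [cc]; omega
  | one =>
    intro t ht
    have h1 : t + 1 ≠ u := by omega
    have h2 : t ≠ 0 := by omega
    have h3 : t - 1 ≠ u := by omega
    simp [cc, Wop, h1, h2, h3]
  | more n ih1 ih2 =>
    intro t ht
    have e : cc pz ε u (n+2) t = Wop pz ε (cc pz ε u (n+1)) t - pz * cc pz ε u n t := rfl
    have h2 : t ≠ 0 := by omega
    rw [e, Wop, ih2 (t+1) (by omega), if_neg h2, ih2 (t-1) (by omega), ih1 t (by omega)]
    ring

lemma shift_sum (pz ε : ℤ) (c φ : ℕ → ℤ) (N : ℕ) (hc : ∀ t, N ≤ t → c t = 0) :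
    ∑ t ∈ Finset.range N,
      c t * (pz * (if t = 0 then 0 else φ (t-1)) + (if t = 0 then ε * φ 0 else 0) + φ (t+1))
    = ∑ t ∈ Finset.range (N+1), Wop pz ε c t * φ t := by
  rcases Nat.eq_zero_or_pos N with hN | hN
  · subst hN
    simp [Wop, hc 0 le_rfl, hc 1 (by omega)]
  have expand : ∀ t, c t * (pz * (if t = 0 then 0 else φ (t-1)) + (if t = 0 then ε * φ 0 else 0) + φ (t+1))
      = (if t = 0 then 0 else pz * c t * φ (t-1)) + (if t = 0 then ε * c 0 * φ 0 else 0) + c t * φ (t+1) := by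
    intro t; split <;> (rename_i h; try simp [h]) <;> ring
  have expand2 : ∀ t : ℕ, Wop pz ε c t * φ t
      = pz * c (t+1) * φ t + (if t = 0 then ε * c 0 else c (t-1)) * φ t := by
    intro t; rw [Wop]; ring
  simp only [expand, expand2, Finset.sum_add_distrib]
  have hP1 : (∑ t ∈ Finset.range N, if t = 0 then 0 else pz * c t * φ (t-1))
      = ∑ t ∈ Finset.range (N+1), pz * c (t+1) * φ t := by
    have ext : (∑ t ∈ Finset.range N, if t = 0 then 0 else pz * c t * φ (t-1))
        = ∑ t ∈ Finset.range (N+1), (if t = 0 then 0 else pz * c t * φ (t-1)) := by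
      rw [Finset.sum_range_succ, hc N le_rfl]
      split <;> ring
    rw [ext, Finset.sum_range_succ' (fun t => if t = 0 then 0 else pz * c t * φ (t-1)) N]
    rw [Finset.sum_range_succ (fun t => pz * c (t+1) * φ t) N, hc (N+1) (by omega)]
    simp
  have hP2 : (∑ t ∈ Finset.range N, if t = 0 then ε * c 0 * φ 0 else 0)
      = ε * c 0 * φ 0 := by
    rw [Finset.sum_ite_eq' (Finset.range N) 0 (fun _ => ε * c 0 * φ 0)]
    simp [hN]
  have hQ2 : (∑ t ∈ Finset.range (N+1), (if t = 0 then ε * c 0 else c (t-1)) * φ t)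
      = ε * c 0 * φ 0 + ∑ t ∈ Finset.range N, c t * φ (t+1) := by
    rw [Finset.sum_range_succ' (fun t => (if t = 0 then ε * c 0 else c (t-1)) * φ t) N]
    simp [add_comm]
  rw [hP1, hP2, hQ2]
  ring

lemma cc_closed (pz ε : ℤ) (u : ℕ) : ∀ n t, cc pz ε u n t = ccf pz ε u n t := by
  intro n
  induction n using Nat.twoStepInduction with
  | zero =>
    intro t
    have e : cc pz ε u 0 t = if t = u then 1 else 0 := rfl
    rw [e, ccf]
    split_ifs <;> try omega
    · rw [show 0 - u - t = 0 from by omega, show u = 0 from by omega]; ring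
    · rw [show (0 + u - t) / 2 = 0 from by omega]; ring
  | one =>
    intro t
    have e : cc pz ε u 1 t = pz * (if t + 1 = u then (1:ℤ) else 0)
        + (if t = 0 then ε * (if 0 = u then (1:ℤ) else 0) else (if t - 1 = u then (1:ℤ) else 0)) := rfl
    rw [e, ccf]
    split_ifs <;> try omega
    · rw [show 1 - u - t = 0 from by omega, show u = 1 from by omega]; ring
    · rw [show (1 + u - t) / 2 = 1 from by omega]; ring
    · rw [show 1 - u - t = 1 from by omega, show u = 0 from by omega]; ring
    · rw [show 1 - u - t = 0 from by omega, show u = 0 from by omega]; ring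
    · rw [show (1 + u - t) / 2 = 0 from by omega]; ring
  | more n ih1 ih2 =>
    intro t
    have e : cc pz ε u (n+2) t = pz * cc pz ε u (n+1) (t+1)
        + (if t = 0 then ε * cc pz ε u (n+1) 0 else cc pz ε u (n+1) (t-1))
        - pz * cc pz ε u n t := rfl
    rw [e, ih2 (t+1), ih2 0, ih2 (t-1), ih1 t]
    by_cases ht0 : t = 0
    · subst ht0
      rw [if_pos rfl]
      have hcase : u ≤ n ∨ u = n + 1 ∨ u = n + 2 ∨ n + 3 ≤ u := by omega
      rcases hcase with hA | hA | hA | hA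
      · -- A1
        rw [ccf_1 pz ε u (n+1) (0+1) (by omega), ccf_1 pz ε u (n+1) 0 (by omega),
            ccf_1 pz ε u n 0 (by omega), ccf_1 pz ε u (n+2) 0 (by omega),
            show n + 1 - u - (0+1) = n - u - 0 from by omega,
            show n + 1 - u - 0 = (n - u - 0) + 1 from by omega,
            show n + 2 - u - 0 = (n - u - 0) + 2 from by omega]
        ring
      · -- A2
        rw [ccf_0 pz ε u (n+1) (0+1) (by omega) (by omega),
            ccf_1 pz ε u (n+1) 0 (by omega),
            ccf_0 pz ε u n 0 (by omega) (by omega),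
            ccf_1 pz ε u (n+2) 0 (by omega),
            show n + 1 - u - 0 = 0 from by omega,
            show n + 2 - u - 0 = 1 from by omega]
        ring
      · -- A3
        rw [ccf_2 pz ε u (n+1) (0+1) (by omega) (by omega) (by omega) (by omega),
            ccf_0 pz ε u (n+1) 0 (by omega) (by omega),
            ccf_0 pz ε u n 0 (by omega) (by omega),
            ccf_1 pz ε u (n+2) 0 (by omega),
            show (n + 1 + u - (0+1)) / 2 = n + 1 from by omega,
            show n + 2 - u - 0 = 0 from by omega,
            show u = n + 2 from by omega]
        ring
      · -- A4
        rw [ccf_0 pz ε u (n+1) (0+1) (by omega) (by omega),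
            ccf_0 pz ε u (n+1) 0 (by omega) (by omega),
            ccf_0 pz ε u n 0 (by omega) (by omega),
            ccf_0 pz ε u (n+2) 0 (by omega) (by omega)]
        ring
    · rw [if_neg ht0]
      have ht1 : 1 ≤ t := by omega
      have hcase : t + u ≤ n ∨ t + u = n + 1 ∨ (t + u = n + 2 ∧ 1 ≤ u)
          ∨ (t + u = n + 2 ∧ u = 0) ∨ (n + 3 ≤ t + u ∧ (n + u + t) % 2 = 1)
          ∨ (n + 3 ≤ t + u ∧ (n + u + t) % 2 = 0 ∧ u ≤ n + t ∧ t ≤ n + u)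
          ∨ u = n + t + 2 ∨ n + t + 4 ≤ u
          ∨ (t = n + u + 2 ∧ 1 ≤ u) ∨ n + u + 4 ≤ t := by
        omega
      rcases hcase with hB | hB | ⟨hB, hB'⟩ | ⟨hB, hB'⟩ | ⟨hB, hB'⟩ | ⟨hB, hB', hB'', hB'''⟩
        | hB | hB | ⟨hB, hB'⟩ | hB
      · -- B1 interior first-branch
        rw [ccf_1 pz ε u (n+1) (t+1) (by omega), ccf_1 pz ε u (n+1) (t-1) (by omega),
            ccf_1 pz ε u n t (by omega), ccf_1 pz ε u (n+2) t (by omega),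
            show n + 1 - u - (t+1) = n - u - t from by omega,
            show n + 1 - u - (t-1) = (n - u - t) + 2 from by omega,
            show n + 2 - u - t = (n - u - t) + 2 from by omega]
        ring
      · -- B2
        rw [ccf_0 pz ε u (n+1) (t+1) (by omega) (by omega),
            ccf_1 pz ε u (n+1) (t-1) (by omega),
            ccf_0 pz ε u n t (by omega) (by omega),
            ccf_1 pz ε u (n+2) t (by omega),
            show n + 1 - u - (t-1) = 1 from by omega,
            show n + 2 - u - t = 1 from by omega]
        ring
      · -- B3a
        rw [ccf_2 pz ε u (n+1) (t+1) (by omega) (by omega) (by omega) (by omega),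
            ccf_1 pz ε u (n+1) (t-1) (by omega),
            ccf_2 pz ε u n t (by omega) (by omega) (by omega) (by omega),
            ccf_1 pz ε u (n+2) t (by omega),
            show n + 1 - u - (t-1) = 0 from by omega,
            show n + 2 - u - t = 0 from by omega,
            show (n + 1 + u - (t+1)) / 2 = (n + u - t) / 2 from by omega,
            show u = (n + u - t) / 2 + 1 from by omega]
        ring
      · -- B3b
        rw [ccf_0 pz ε u (n+1) (t+1) (by omega) (by omega),
            ccf_1 pz ε u (n+1) (t-1) (by omega),
            ccf_0 pz ε u n t (by omega) (by omega),
            ccf_1 pz ε u (n+2) t (by omega),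
            show n + 1 - u - (t-1) = 0 from by omega,
            show n + 2 - u - t = 0 from by omega]
        ring
      · -- B4 odd
        rw [ccf_0 pz ε u (n+1) (t+1) (by omega) (by omega),
            ccf_0 pz ε u (n+1) (t-1) (by omega) (by omega),
            ccf_0 pz ε u n t (by omega) (by omega),
            ccf_0 pz ε u (n+2) t (by omega) (by omega)]
        ring
      · -- C1 interior even
        rw [ccf_2 pz ε u (n+1) (t+1) (by omega) (by omega) (by omega) (by omega),
            ccf_2 pz ε u (n+1) (t-1) (by omega) (by omega) (by omega) (by omega),
            ccf_2 pz ε u n t (by omega) (by omega) (by omega) (by omega),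
            ccf_2 pz ε u (n+2) t (by omega) (by omega) (by omega) (by omega),
            show (n + 1 + u - (t+1)) / 2 = (n + u - t) / 2 from by omega,
            show (n + 1 + u - (t-1)) / 2 = (n + u - t) / 2 + 1 from by omega,
            show (n + 2 + u - t) / 2 = (n + u - t) / 2 + 1 from by omega]
        ring
      · -- C2 left edge
        rw [ccf_2 pz ε u (n+1) (t+1) (by omega) (by omega) (by omega) (by omega),
            ccf_0 pz ε u (n+1) (t-1) (by omega) (by omega),
            ccf_0 pz ε u n t (by omega) (by omega),
            ccf_2 pz ε u (n+2) t (by omega) (by omega) (by omega) (by omega),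
            show (n + 1 + u - (t+1)) / 2 = n + 1 from by omega,
            show (n + 2 + u - t) / 2 = n + 2 from by omega]
        ring
      · -- C3 far left
        rw [ccf_0 pz ε u (n+1) (t+1) (by omega) (by omega),
            ccf_0 pz ε u (n+1) (t-1) (by omega) (by omega),
            ccf_0 pz ε u n t (by omega) (by omega),
            ccf_0 pz ε u (n+2) t (by omega) (by omega)]
        ring
      · -- C4b right edge, u ≥ 1
        rw [ccf_0 pz ε u (n+1) (t+1) (by omega) (by omega),
            ccf_2 pz ε u (n+1) (t-1) (by omega) (by omega) (by omega) (by omega),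
            ccf_0 pz ε u n t (by omega) (by omega),
            ccf_2 pz ε u (n+2) t (by omega) (by omega) (by omega) (by omega),
            show (n + 1 + u - (t-1)) / 2 = 0 from by omega,
            show (n + 2 + u - t) / 2 = 0 from by omega]
        ring
      · -- C5 far right
        rw [ccf_0 pz ε u (n+1) (t+1) (by omega) (by omega),
            ccf_0 pz ε u (n+1) (t-1) (by omega) (by omega),
            ccf_0 pz ε u n t (by omega) (by omega),
            ccf_0 pz ε u (n+2) t (by omega) (by omega)]
        ring
lemma final_split (pz ε : ℤ) (u n : ℕ) (hn : u ≤ n) (φ : ℕ → ℤ) :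
    ∑ t ∈ Finset.range (n+u+1), ccf pz ε u n t * φ t
    = (∑ t ∈ Finset.range (n-u+1), ε^(n-u-t) * pz^u * φ t)
      + ∑ s ∈ Finset.Icc 1 u, pz^(u-s) * φ (n-u+2*s) := by
  rw [Finset.range_eq_Ico,
    ← Finset.sum_Ico_consecutive (fun t => ccf pz ε u n t * φ t)
      (Nat.zero_le (n-u+1)) (by omega : n-u+1 ≤ n+u+1)]
  congr 1
  · rw [← Finset.range_eq_Ico]
    refine Finset.sum_congr rfl fun t ht => ?_
    have ht' : t + u ≤ n := by
      have := Finset.mem_range.mp ht; omega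
    rw [ccf_1 pz ε u n t ht']
  · have hinj : ∀ x ∈ Finset.Icc 1 u, ∀ y ∈ Finset.Icc 1 u,
        n - u + 2*x = n - u + 2*y → x = y := by intro x hx y hy h; omega
    have himg : (Finset.Icc 1 u).image (fun s => n - u + 2*s) ⊆ Finset.Ico (n-u+1) (n+u+1) := by
      intro x hx
      obtain ⟨s, hs, rfl⟩ := Finset.mem_image.mp hx
      have hs' := Finset.mem_Icc.mp hs
      exact Finset.mem_Ico.mpr ⟨by omega, by omega⟩
    calc ∑ t ∈ Finset.Ico (n-u+1) (n+u+1), ccf pz ε u n t * φ t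
        = ∑ t ∈ (Finset.Icc 1 u).image (fun s => n - u + 2*s), ccf pz ε u n t * φ t := by
          refine (Finset.sum_subset himg ?_).symm
          intro x hx hnx
          have hx' := Finset.mem_Ico.mp hx
          by_cases hpar : (n + u - x) % 2 = 0
          · exfalso
            apply hnx
            exact Finset.mem_image.mpr ⟨u - (n+u-x)/2,
              Finset.mem_Icc.mpr ⟨by omega, by omega⟩, by omega⟩
          · rw [ccf_0 pz ε u n x (by omega) (Or.inr (Or.inr (by omega))), zero_mul]
      _ = ∑ s ∈ Finset.Icc 1 u, ccf pz ε u n (n-u+2*s) * φ (n-u+2*s) :=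
          Finset.sum_image hinj
      _ = ∑ s ∈ Finset.Icc 1 u, pz^(u-s) * φ (n-u+2*s) := by
          refine Finset.sum_congr rfl fun s hs => ?_
          have hs' := Finset.mem_Icc.mp hs
          rw [ccf_2 pz ε u n (n-u+2*s) (by omega) (by omega) (by omega) (by omega),
            show (n + u - (n-u+2*s)) / 2 = u - s from by omega]

/-- Lemma 3.4 (2): explicit formula for the Folsom–Ono weight 1/2
Hecke-transformed coefficients `A_{p^n}(D, p^{2u}·i)` for `p² ∤ i`, `n ≥ u`. -/
theorem stmt_16 {p : ℕ} [Fact p.Prime] (hp : 5 ≤ p)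
    (A : ℤ → ℤ → ℤ)
    (V : (ℤ → ℤ → ℤ) → ℤ → ℤ → ℤ)
    (hV : ∀ c : ℤ → ℤ → ℤ, ∀ D d : ℤ,
      V c D d = (p : ℤ) * c ((p : ℤ) ^ 2 * D) d
        + legendreSym p 12 * legendreSym p D * c D d
        + (if (p : ℤ) ^ 2 ∣ D then c (D / (p : ℤ) ^ 2) d else 0))
    (hVA : ∀ D d : ℤ,
      V A D d = (p : ℤ) * (if (p : ℤ) ^ 2 ∣ d then A D (d / (p : ℤ) ^ 2) else 0)
        + legendreSym p 12 * legendreSym p (-d) * A D d + A D ((p : ℤ) ^ 2 * d))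
    (An : ℕ → ℤ → ℤ → ℤ)
    (hA0 : An 0 = A) (hA1 : An 1 = V A)
    (hArec : ∀ n : ℕ, ∀ D d : ℤ,
      An (n + 2) D d = V (An (n + 1)) D d - (p : ℤ) * An n D d)
    (i : ℤ) (hip : ¬ (p : ℤ) ^ 2 ∣ i) (u : ℕ)
    (n : ℕ) (hn : u ≤ n) (D : ℤ) :
    An n D ((p : ℤ) ^ (2 * u) * i) =
      ∑ t ∈ Finset.range (n - u + 1),
        (legendreSym p 12) ^ (n - u - t) * (legendreSym p (-i)) ^ (n - u - t)
          * (p : ℤ) ^ u * A D ((p : ℤ) ^ (2 * t) * i)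
      + ∑ t ∈ Finset.Icc 1 u,
          (p : ℤ) ^ (u - t) * A D ((p : ℤ) ^ (2 * (n - u) + 4 * t) * i) := by
  have hpprime := (Fact.out : p.Prime)
  have hpz : (p : ℤ) ≠ 0 := by exact_mod_cast hpprime.ne_zero
  have hp2 : ((p : ℤ))^2 ≠ 0 := pow_ne_zero 2 hpz
  set ε : ℤ := legendreSym p 12 * legendreSym p (-i) with hεdef
  -- expansion of V A on the d-grid
  have hVAe : ∀ (t : ℕ) (D' : ℤ), V A D' ((p:ℤ)^(2*t) * i) =
      (p:ℤ) * (if t = 0 then 0 else A D' ((p:ℤ)^(2*(t-1)) * i))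
      + (if t = 0 then ε * A D' ((p:ℤ)^(2*0) * i) else 0)
      + A D' ((p:ℤ)^(2*(t+1)) * i) := by
    intro t D'
    rw [hVA]
    cases t with
    | zero =>
      rw [show (2*0 : ℕ) = 0 from rfl, pow_zero, one_mul, if_neg hip]
      norm_num
      exact Or.inl hεdef.symm
    | succ s =>
      have hne : s + 1 ≠ 0 := Nat.succ_ne_zero s
      rw [if_neg hne, if_neg hne]
      have hdvd : (p:ℤ)^2 ∣ (p:ℤ)^(2*(s+1)) * i :=
        ⟨(p:ℤ)^(2*s) * i, by ring⟩
      rw [if_pos hdvd]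
      have hdiv : ((p:ℤ)^(2*(s+1)) * i) / (p:ℤ)^2 = (p:ℤ)^(2*s) * i := by
        rw [show (p:ℤ)^(2*(s+1)) * i = (p:ℤ)^2 * ((p:ℤ)^(2*s) * i) from by ring,
          Int.mul_ediv_cancel_left _ hp2]
      have hleg : legendreSym p (-((p:ℤ)^(2*(s+1)) * i)) = 0 := by
        rw [legendreSym.eq_zero_iff]
        push_cast
        rw [ZMod.natCast_self]
        rw [zero_pow (by omega : 2*(s+1) ≠ 0)]
        ring
      rw [hdiv, hleg]
      rw [show (p:ℤ)^2 * ((p:ℤ)^(2*(s+1)) * i) = (p:ℤ)^(2*(s+1+1)) * i from by ring,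
        show s + 1 - 1 = s from rfl]
      ring
  -- the key V-linearity step
  have keyV : ∀ m : ℕ,
      (∀ D' : ℤ, An m D' ((p:ℤ)^(2*u) * i)
        = ∑ t ∈ Finset.range (m+u+1), cc (p:ℤ) ε u m t * A D' ((p:ℤ)^(2*t) * i)) →
      ∀ D' : ℤ, V (An m) D' ((p:ℤ)^(2*u) * i)
        = ∑ t ∈ Finset.range (m+u+2), Wop (p:ℤ) ε (cc (p:ℤ) ε u m) t * A D' ((p:ℤ)^(2*t) * i) := by
    intro m hm D'
    rw [hV (An m) D' ((p:ℤ)^(2*u) * i)]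
    simp only [hm]
    have hite : (if (p:ℤ)^2 ∣ D' then (∑ t ∈ Finset.range (m+u+1),
          cc (p:ℤ) ε u m t * A (D' / (p:ℤ)^2) ((p:ℤ)^(2*t) * i)) else 0)
        = ∑ t ∈ Finset.range (m+u+1),
          (if (p:ℤ)^2 ∣ D' then cc (p:ℤ) ε u m t * A (D' / (p:ℤ)^2) ((p:ℤ)^(2*t) * i) else 0) := by
      split <;> simp
    rw [hite, Finset.mul_sum, Finset.mul_sum, ← Finset.sum_add_distrib, ← Finset.sum_add_distrib]
    have hterm : ∀ t ∈ Finset.range (m+u+1),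
        (p:ℤ) * (cc (p:ℤ) ε u m t * A ((p:ℤ)^2 * D') ((p:ℤ)^(2*t) * i))
        + legendreSym p 12 * legendreSym p D' * (cc (p:ℤ) ε u m t * A D' ((p:ℤ)^(2*t) * i))
        + (if (p:ℤ)^2 ∣ D' then cc (p:ℤ) ε u m t * A (D' / (p:ℤ)^2) ((p:ℤ)^(2*t) * i) else 0)
        = cc (p:ℤ) ε u m t * ((p:ℤ) * (if t = 0 then 0 else A D' ((p:ℤ)^(2*(t-1)) * i))
            + (if t = 0 then ε * A D' ((p:ℤ)^(2*0) * i) else 0)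
            + A D' ((p:ℤ)^(2*(t+1)) * i)) := by
      intro t _
      have hite2 : (if (p:ℤ)^2 ∣ D' then cc (p:ℤ) ε u m t * A (D' / (p:ℤ)^2) ((p:ℤ)^(2*t) * i) else 0)
          = cc (p:ℤ) ε u m t * (if (p:ℤ)^2 ∣ D' then A (D' / (p:ℤ)^2) ((p:ℤ)^(2*t) * i) else 0) := by
        split <;> ring
      rw [hite2, ← hVAe t D', hV A D' ((p:ℤ)^(2*t) * i)]
      ring
    rw [Finset.sum_congr rfl hterm]
    have := shift_sum (p:ℤ) ε (cc (p:ℤ) ε u m) (fun t => A D' ((p:ℤ)^(2*t) * i)) (m+u+1)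
      (fun t ht => cc_supp (p:ℤ) ε u m t (by omega))
    rw [show m+u+2 = m+u+1+1 from rfl]
    exact this
  -- the coefficient identity for all n
  have key : ∀ m : ℕ, ∀ D' : ℤ, An m D' ((p:ℤ)^(2*u) * i)
      = ∑ t ∈ Finset.range (m+u+1), cc (p:ℤ) ε u m t * A D' ((p:ℤ)^(2*t) * i) := by
    intro m
    induction m using Nat.twoStepInduction with
    | zero =>
      intro D'
      rw [hA0, Finset.sum_eq_single u]
      · rw [show cc (p:ℤ) ε u 0 u = if u = u then 1 else 0 from rfl, if_pos rfl, one_mul]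
      · intro b _ hb
        rw [show cc (p:ℤ) ε u 0 b = if b = u then 1 else 0 from rfl, if_neg hb, zero_mul]
      · intro h
        exact absurd (Finset.mem_range.mpr (by omega)) h
    | one =>
      intro D'
      have h0 : ∀ D'' : ℤ, An 0 D'' ((p:ℤ)^(2*u) * i)
          = ∑ t ∈ Finset.range (0+u+1), cc (p:ℤ) ε u 0 t * A D'' ((p:ℤ)^(2*t) * i) := by
        intro D''
        rw [hA0, Finset.sum_eq_single u]
        · rw [show cc (p:ℤ) ε u 0 u = if u = u then 1 else 0 from rfl, if_pos rfl, one_mul]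
        · intro b _ hb
          rw [show cc (p:ℤ) ε u 0 b = if b = u then 1 else 0 from rfl, if_neg hb, zero_mul]
        · intro h
          exact absurd (Finset.mem_range.mpr (by omega)) h
      have hv : An 1 D' ((p:ℤ)^(2*u) * i) = V (An 0) D' ((p:ℤ)^(2*u) * i) := by
        rw [hA1, hA0]
      rw [hv, keyV 0 h0 D']
      exact Finset.sum_congr (by congr 1; omega) fun t _ => rfl
    | more m ih1 ih2 =>
      intro D'
      rw [hArec m D' ((p:ℤ)^(2*u) * i), keyV (m+1) ih2 D']
      have ext : (∑ t ∈ Finset.range (m+u+1), cc (p:ℤ) ε u m t * A D' ((p:ℤ)^(2*t) * i))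
          = ∑ t ∈ Finset.range (m+1+u+2), cc (p:ℤ) ε u m t * A D' ((p:ℤ)^(2*t) * i) := by
        refine Finset.sum_subset (Finset.range_subset_range.mpr (by omega)) ?_
        intro x _ hx
        rw [cc_supp (p:ℤ) ε u m x (by have := Finset.mem_range.not.mp hx; omega), zero_mul]
      rw [ih1 D', ext, Finset.mul_sum, ← Finset.sum_sub_distrib,
        show m+2+u+1 = m+1+u+2 from by omega]
      refine Finset.sum_congr rfl fun t _ => ?_
      rw [show cc (p:ℤ) ε u (m+2) t = Wop (p:ℤ) ε (cc (p:ℤ) ε u (m+1)) t - (p:ℤ) * cc (p:ℤ) ε u m t from rfl]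
      ring
  -- finish
  calc An n D ((p:ℤ)^(2*u) * i)
      = ∑ t ∈ Finset.range (n+u+1), cc (p:ℤ) ε u n t * A D ((p:ℤ)^(2*t) * i) := key n D
    _ = ∑ t ∈ Finset.range (n+u+1), ccf (p:ℤ) ε u n t * A D ((p:ℤ)^(2*t) * i) :=
        Finset.sum_congr rfl fun t _ => by rw [cc_closed]
    _ = (∑ t ∈ Finset.range (n-u+1), ε^(n-u-t) * (p:ℤ)^u * A D ((p:ℤ)^(2*t) * i))
        + ∑ s ∈ Finset.Icc 1 u, (p:ℤ)^(u-s) * A D ((p:ℤ)^(2*(n-u+2*s)) * i) :=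
        final_split (p:ℤ) ε u n hn (fun t => A D ((p:ℤ)^(2*t) * i))
    _ = _ := by
        congr 1
        · refine Finset.sum_congr rfl fun t _ => ?_
          rw [hεdef, mul_pow]
        · refine Finset.sum_congr rfl fun s _ => ?_
          rw [show 2*(n-u+2*s) = 2*(n-u) + 4*s from by ring]
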